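/- Let B = ℂ[u, v, w, s, t] be the polynomial ring in five variables and set ℓ₁ = uw + s², ℓ₂ = ut − vs, ℓ₃ = vw + st. Then the colon ideal ⟨ℓ₁, ℓ₂, ℓ₃⟩ : ⟨u⟩ equals ⟨ℓ₁, ℓ₂, ℓ₃⟩; equivalently, the image of u in the quotient ring B/⟨ℓ₁, ℓ₂, ℓ₃⟩ is not a zero divisor. -/

import Mathlib

open MvPolynomial

noncomputable section

/-- Substitution `X 0 ↦ 0`. -/
noncomputable def sub0 : MvPolynomial (Fin 5) ℂ →ₐ[ℂ] MvPolynomial (Fin 5) ℂ :=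
  aeval (fun i => if i = 0 then 0 else X i)

lemma sub0_X0 : sub0 (X 0) = 0 := by simp [sub0]

lemma sub0_X (i : Fin 5) (hi : i ≠ 0) : sub0 (X i) = X i := by simp [sub0, hi]

lemma X0_dvd_sub_sub0 (g : MvPolynomial (Fin 5) ℂ) :
    (X 0 : MvPolynomial (Fin 5) ℂ) ∣ g - sub0 g := by
  induction g using MvPolynomial.induction_on with
  | C a => simp [sub0]
  | add p q hp hq =>
    have := dvd_add hp hq
    simpa [map_add, add_sub_add_comm] using this
  | mul_X p i hp =>
    rcases eq_or_ne i 0 with rfl | hi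
    · rw [map_mul, sub0_X0, mul_zero, sub_zero]
      exact Dvd.intro_left p rfl
    · rw [map_mul, sub0_X i hi, ← sub_mul]
      exact hp.mul_right (X i)

lemma primeX (i : Fin 5) : Prime (X i : MvPolynomial (Fin 5) ℂ) := by
  let e := ((renameEquiv ℂ (Equiv.swap i 0)).trans (finSuccEquiv ℂ 4)).toMulEquiv
  rw [← MulEquiv.prime_iff e]
  have he : e (X i) = Polynomial.X := by
    show (finSuccEquiv ℂ 4) ((renameEquiv ℂ (Equiv.swap i 0)) (X i)) = Polynomial.X
    rw [renameEquiv_apply, rename_X, Equiv.swap_apply_left, finSuccEquiv_X_zero]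
  rw [he]
  exact Polynomial.prime_X

lemma not_dvd_X {i j : Fin 5} (h : i ≠ j) : ¬ (X i : MvPolynomial (Fin 5) ℂ) ∣ X j := by
  rintro ⟨c, hc⟩
  have := congrArg (eval (fun k => if k = i then (0 : ℂ) else 1)) hc
  simp [eval_X, h.symm] at this

lemma mem_span_triple {R : Type*} [CommRing R] {x p q r : R} :
    x ∈ Ideal.span ({p, q, r} : Set R) ↔ ∃ a b c, x = a * p + b * q + c * r := by
  constructor
  · intro hx
    rw [Ideal.mem_span_insert] at hx
    obtain ⟨a, z, hz, rfl⟩ := hx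
    rw [Ideal.mem_span_pair] at hz
    obtain ⟨b, c, rfl⟩ := hz
    exact ⟨a, b, c, by ring⟩
  · rintro ⟨a, b, c, rfl⟩
    refine Ideal.add_mem _ (Ideal.add_mem _ ?_ ?_) ?_ <;>
      exact Ideal.mul_mem_left _ _ (Ideal.subset_span (by simp))

/-- In `B = ℂ[u, v, w, s, t]` (variables `X 0, …, X 4`), with
`ℓ₁ = uw + s²`, `ℓ₂ = ut − vs`, `ℓ₃ = vw + st`, the colon ideal
`⟨ℓ₁, ℓ₂, ℓ₃⟩ : ⟨u⟩` equals `⟨ℓ₁, ℓ₂, ℓ₃⟩`. -/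
theorem colon_ideal_eq :
    (Ideal.span {(X 0 * X 2 + X 3 ^ 2 : MvPolynomial (Fin 5) ℂ),
        X 0 * X 4 - X 1 * X 3, X 1 * X 2 + X 3 * X 4}).colon
      (Ideal.span {(X 0 : MvPolynomial (Fin 5) ℂ)}) =
    Ideal.span {(X 0 * X 2 + X 3 ^ 2 : MvPolynomial (Fin 5) ℂ),
        X 0 * X 4 - X 1 * X 3, X 1 * X 2 + X 3 * X 4} := by
  apply le_antisymm
  · intro f hf
    rw [Ideal.mem_colon_span_singleton] at hf
    rw [mem_span_triple] at hf ⊢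
    obtain ⟨a, b, c, hfe⟩ := hf
    -- apply the substitution `X 0 ↦ 0` to the identity
    have h2 := congrArg sub0 hfe
    simp only [map_add, map_mul, map_sub, map_pow, sub0_X0,
      sub0_X 1 (by decide), sub0_X 2 (by decide), sub0_X 3 (by decide),
      sub0_X 4 (by decide)] at h2
    set a₀ := sub0 a with ha₀
    set b₀ := sub0 b with hb₀
    set c₀ := sub0 c with hc₀
    -- clean form of the reduced relation
    have hsub : (0 : MvPolynomial (Fin 5) ℂ) =
        a₀ * X 3 ^ 2 + b₀ * (-(X 1 * X 3)) + c₀ * (X 1 * X 2 + X 3 * X 4) := by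
      linear_combination h2
    have hps : Prime (X 3 : MvPolynomial (Fin 5) ℂ) := primeX 3
    -- X 3 divides c₀
    have hsc : (X 3 : MvPolynomial (Fin 5) ℂ) ∣ c₀ := by
      have h1 : (X 3 : MvPolynomial (Fin 5) ℂ) ∣ c₀ * (X 1 * X 2) :=
        ⟨b₀ * X 1 - a₀ * X 3 - c₀ * X 4, by linear_combination -hsub⟩
      rcases hps.dvd_or_dvd h1 with h | h
      · exact h
      · rcases hps.dvd_or_dvd h with h | h
        · exact absurd h (not_dvd_X (by decide))
        · exact absurd h (not_dvd_X (by decide))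
    obtain ⟨q', hq'⟩ := hsc
    have hc0 : c₀ = -(X 3 * -q') := by rw [hq']; ring
    set q : MvPolynomial (Fin 5) ℂ := -q' with hq
    -- divide the relation by X 3
    have hrel2 : a₀ * X 3 - b₀ * X 1 - q * (X 1 * X 2) - q * (X 3 * X 4) = 0 := by
      have hmul : (X 3 : MvPolynomial (Fin 5) ℂ) *
          (a₀ * X 3 - b₀ * X 1 - q * (X 1 * X 2) - q * (X 3 * X 4)) = 0 := by
        linear_combination -hsub - (X 1 * X 2 + X 3 * X 4) * hc0
      exact (mul_eq_zero.mp hmul).resolve_left hps.ne_zero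
    -- X 3 divides b₀ + q * X 2
    have hsb : (X 3 : MvPolynomial (Fin 5) ℂ) ∣ b₀ + q * X 2 := by
      have h1 : (X 3 : MvPolynomial (Fin 5) ℂ) ∣ X 1 * (b₀ + q * X 2) :=
        ⟨a₀ - q * X 4, by linear_combination -hrel2⟩
      rcases hps.dvd_or_dvd h1 with h | h
      · exact absurd h (not_dvd_X (by decide))
      · exact h
    obtain ⟨p, hp⟩ := hsb
    have hb0 : b₀ = X 3 * p - q * X 2 := by rw [← hp]; ring
    have ha0 : a₀ = X 1 * p + q * X 4 := by
      have hmul : (X 3 : MvPolynomial (Fin 5) ℂ) * (a₀ - (X 1 * p + q * X 4)) = 0 := by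
        linear_combination hrel2 + X 1 * hb0
      have := (mul_eq_zero.mp hmul).resolve_left hps.ne_zero
      linear_combination this
    -- lift back: the differences are divisible by X 0
    obtain ⟨a₂, hA⟩ := X0_dvd_sub_sub0 a
    obtain ⟨b₂, hB⟩ := X0_dvd_sub_sub0 b
    obtain ⟨c₂, hC⟩ := X0_dvd_sub_sub0 c
    rw [← ha₀] at hA; rw [← hb₀] at hB; rw [← hc₀] at hC
    refine ⟨a₂, b₂, c₂ + p, ?_⟩
    have hune : (X 0 : MvPolynomial (Fin 5) ℂ) ≠ 0 := (primeX 0).ne_zero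
    apply mul_left_cancel₀ hune
    linear_combination hfe + (X 0 * X 2 + X 3 ^ 2) * (hA + ha0)
      + (X 0 * X 4 - X 1 * X 3) * (hB + hb0) + (X 1 * X 2 + X 3 * X 4) * (hC + hc0)
  · intro f hf
    rw [Ideal.mem_colon_span_singleton]
    exact Ideal.mul_mem_right _ _ hf
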